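/- Let C be a nontrivial positive definite function on [−1,1] with C(1) = 1 (so C is strictly increasing and strictly convex on [0,1]). If C'(1) ≤ 1, then C has exactly one fixed point in [−1,1], namely c = 1. If C'(1) > 1 and C is not an odd function, then C has exactly two fixed points: one point c* in [0,1) and the point 1. If C is odd and nontrivial, it has exactly three fixed points: −1, 0, and 1. -/

import Mathlib

lemma bern_aux (c : ℝ) (hc : -1 ≤ c) (i : ℕ) : 1 + (i:ℝ) * (c - 1) ≤ c ^ i := by
  have h := one_add_mul_le_pow (by linarith : (-2:ℝ) ≤ c - 1) i
  have h' : (1 + (c - 1)) = c := by ring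
  rwa [h'] at h

lemma bern_strict_aux (c : ℝ) (hc : -1 ≤ c) (hc1 : c < 1) (k : ℕ) (hk : 2 ≤ k) :
    1 + (k:ℝ) * (c - 1) < c ^ k := by
  obtain ⟨m, rfl⟩ : ∃ m, k = m + 2 := ⟨k - 2, by omega⟩
  have hm := bern_aux c hc m
  have hpow : c ^ (m + 2) = c ^ m * c ^ 2 := by ring
  rw [hpow]
  have hsq : (0:ℝ) ≤ c ^ 2 := sq_nonneg c
  have h1 : (1 + (m:ℝ) * (c - 1)) * c ^ 2 ≤ c ^ m * c ^ 2 :=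
    mul_le_mul_of_nonneg_right hm hsq
  have hmn : (0:ℝ) ≤ (m:ℝ) := Nat.cast_nonneg m
  push_cast
  nlinarith [sq_nonneg (c - 1), mul_nonneg (mul_nonneg hmn (sq_nonneg (c-1))) (by linarith : (0:ℝ) ≤ c + 1)]

lemma neg_le_pow_aux (c : ℝ) (h1 : -1 ≤ c) (h2 : c ≤ 0) (i : ℕ) : c ≤ c ^ i := by
  rcases Nat.even_or_odd i with he | ho
  · exact le_trans h2 (he.pow_nonneg c)
  · have h3 : c ^ i ≤ 0 := ho.pow_nonpos h2
    have h4 : |c ^ i| ≤ |c| := by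
      rw [abs_pow]
      exact pow_le_of_le_one (abs_nonneg c) (abs_le.2 ⟨h1, by linarith⟩) ho.pos.ne'
    rw [abs_of_nonpos h3, abs_of_nonpos h2] at h4
    linarith

lemma pow_lb_aux (c : ℝ) (h0 : 0 ≤ c) (h1 : c ≤ 1) : ∀ i : ℕ, (i:ℝ) * c ^ i * (1 - c) ≤ 1 - c ^ i := by
  intro i
  induction i with
  | zero => simp
  | succ n ih =>
      have hcn : (0:ℝ) ≤ c ^ n := pow_nonneg h0 n
      have hcn1 : c ^ (n+1) ≤ 1 := pow_le_one₀ h0 h1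
      have h5 := mul_le_mul_of_nonneg_left ih h0
      have h6 : c ^ (n+1) = c ^ n * c := pow_succ c n
      have h7 : (0:ℝ) ≤ (1 - c) * (1 - c ^ (n+1)) :=
        mul_nonneg (by linarith) (by linarith)
      have h8 : (n:ℝ) * c ^ (n+1) * (1-c) ≤ c - c ^ (n+1) := by
        have he : c * ((n:ℝ) * c ^ n * (1 - c)) = (n:ℝ) * c ^ (n+1) * (1-c) := by
          rw [h6]; ring
        have he2 : c * (1 - c ^ n) = c - c ^ (n+1) := by rw [h6]; ring
        rw [he, he2] at h5; exact h5
      push_cast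
      nlinarith [h8, h7]

theorem fixed_points_of_C (b : ℕ → ℝ) (hb : ∀ i, 0 ≤ b i) (C : ℝ → ℝ)
    (hC : ∀ c ∈ Set.Icc (-1:ℝ) 1, HasSum (fun i => b i * c ^ i) (C c))
    (hC1 : C 1 = 1)
    (hnc : ¬ ∀ x ∈ Set.Icc (-1:ℝ) 1, C x = C 0)
    (hni : ¬ ∀ x ∈ Set.Icc (-1:ℝ) 1, C x = x)
    (d : ℝ) (hd : HasSum (fun i : ℕ => (i : ℝ) * b i) d) :
    (d ≤ 1 → ∀ c ∈ Set.Icc (-1:ℝ) 1, (C c = c ↔ c = 1)) ∧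
    (1 < d → (¬ ∀ x ∈ Set.Icc (-1:ℝ) 1, C (-x) = -C x) →
      ∃ cs ∈ Set.Ico (0:ℝ) 1, ∀ c ∈ Set.Icc (-1:ℝ) 1, (C c = c ↔ c = cs ∨ c = 1)) ∧
    ((∀ x ∈ Set.Icc (-1:ℝ) 1, C (-x) = -C x) →
      ∀ c ∈ Set.Icc (-1:ℝ) 1, (C c = c ↔ c = -1 ∨ c = 0 ∨ c = 1)) := by
  have hmem1 : (1:ℝ) ∈ Set.Icc (-1:ℝ) 1 := by norm_num
  have hmem0 : (0:ℝ) ∈ Set.Icc (-1:ℝ) 1 := by norm_num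
  have hb1 : HasSum b 1 := by
    have := hC 1 hmem1
    rw [hC1] at this
    simpa using this
  by_cases hk : ∃ k, 2 ≤ k ∧ 0 < b k
  case neg =>
    -- degenerate affine case
    push_neg at hk
    have hbz : ∀ k, 2 ≤ k → b k = 0 := fun k h2 => le_antisymm (hk k h2) (hb k)
    have hCeq : ∀ c ∈ Set.Icc (-1:ℝ) 1, C c = b 0 + b 1 * c := by
      intro c hc
      have h1 : HasSum (fun i => b i * c ^ i) (∑ i ∈ Finset.range 2, b i * c ^ i) := by
        apply hasSum_sum_of_ne_finset_zero
        intro i hi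
        have h2 : 2 ≤ i := by simp only [Finset.mem_range, not_lt] at hi; omega
        simp [hbz i h2]
      have h3 := (hC c hc).unique h1
      simpa [Finset.sum_range_succ] using h3
    have hbsum : b 0 + b 1 = 1 := by
      have := hCeq 1 hmem1
      rw [hC1] at this
      linarith [this]
    have hb0pos : 0 < b 0 := by
      rcases (hb 0).lt_or_eq with h | h
      · exact h
      · exfalso
        apply hni
        intro x hx
        rw [hCeq x hx, ← h]
        have : b 1 = 1 := by linarith
        rw [this]; ring
    have hd1 : d = b 1 := by
      have h1 : HasSum (fun i : ℕ => (i:ℝ) * b i) (∑ i ∈ Finset.range 2, (i:ℝ) * b i) := by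
        apply hasSum_sum_of_ne_finset_zero
        intro i hi
        have h2 : 2 ≤ i := by simp only [Finset.mem_range, not_lt] at hi; omega
        simp [hbz i h2]
      have := hd.unique h1
      simpa [Finset.sum_range_succ] using this
    refine ⟨?_, ?_, ?_⟩
    · intro _ c hc
      constructor
      · intro hfix
        rw [hCeq c hc] at hfix
        have h1 : b 0 * (1 - c) = 0 := by nlinarith
        rcases mul_eq_zero.mp h1 with h | h
        · linarith
        · linarith
      · rintro rfl; exact hC1
    · intro hdgt _
      exfalso
      rw [hd1] at hdgt
      linarith
    · intro hodd
      exfalso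
      have h1 := hodd 0 hmem0
      rw [neg_zero] at h1
      have h2 : C 0 = 0 := by linarith
      rw [hCeq 0 hmem0] at h2
      simp at h2
      linarith
  case pos =>
  obtain ⟨k, hk2, hkpos⟩ := hk
  -- Key strict lower bound: C c > 1 + (c-1)*d for c ∈ [-1,1)
  have L1 : ∀ c, -1 ≤ c → c < 1 → 1 + (c - 1) * d < C c := by
    intro c hcl hcr
    have hsumf : HasSum (fun i : ℕ => b i + (c - 1) * ((i:ℝ) * b i)) (1 + (c - 1) * d) :=
      hb1.add (hd.mul_left (c - 1))
    have hle : ∀ i : ℕ, b i + (c - 1) * ((i:ℝ) * b i) ≤ b i * c ^ i := by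
      intro i
      have h2 := bern_aux c hcl i
      calc b i + (c - 1) * ((i:ℝ) * b i) = b i * (1 + (i:ℝ) * (c - 1)) := by ring
        _ ≤ b i * c ^ i := mul_le_mul_of_nonneg_left h2 (hb i)
    have hstrict : b k + (c - 1) * ((k:ℝ) * b k) < b k * c ^ k := by
      have h2 := bern_strict_aux c hcl hcr k hk2
      calc b k + (c - 1) * ((k:ℝ) * b k) = b k * (1 + (k:ℝ) * (c - 1)) := by ring
        _ < b k * c ^ k := by exact mul_lt_mul_of_pos_left h2 hkpos
    exact hasSum_lt hle hstrict hsumf (hC c ⟨hcl, hcr.le⟩)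
  -- strict convexity three-point lemma
  have L2 : ∀ x y z : ℝ, 0 ≤ x → x < y → y < z → z ≤ 1 → C x = x → C z = z → C y < y := by
    intro x y z hx0 hxy hyz hz1 hfx hfz
    have hzx : 0 < z - x := by linarith
    set t : ℝ := (z - y) / (z - x) with ht_def
    set u : ℝ := (y - x) / (z - x) with hu_def
    have ht : 0 < t := div_pos (by linarith) hzx
    have hu : 0 < u := div_pos (by linarith) hzx
    have htu : t + u = 1 := by
      rw [ht_def, hu_def, ← add_div, div_eq_one_iff_eq hzx.ne']
      ring
    have hxyz : t * x + u * z = y := by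
      rw [ht_def, hu_def]
      field_simp
      ring
    have hxmem : x ∈ Set.Icc (-1:ℝ) 1 := ⟨by linarith, by linarith⟩
    have hymem : y ∈ Set.Icc (-1:ℝ) 1 := ⟨by linarith, by linarith⟩
    have hzmem : z ∈ Set.Icc (-1:ℝ) 1 := ⟨by linarith, by linarith⟩
    have hsumr : HasSum (fun i => t * (b i * x ^ i) + u * (b i * z ^ i)) (t * C x + u * C z) :=
      ((hC x hxmem).mul_left t).add ((hC z hzmem).mul_left u)
    have hle : ∀ i : ℕ, b i * y ^ i ≤ t * (b i * x ^ i) + u * (b i * z ^ i) := by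
      intro i
      have hconv := (convexOn_pow (𝕜 := ℝ) i).2 (Set.mem_Ici.2 hx0)
        (Set.mem_Ici.2 (by linarith : (0:ℝ) ≤ z)) ht.le hu.le htu
      simp only [smul_eq_mul] at hconv
      rw [hxyz] at hconv
      calc b i * y ^ i ≤ b i * (t * x ^ i + u * z ^ i) :=
            mul_le_mul_of_nonneg_left hconv (hb i)
        _ = t * (b i * x ^ i) + u * (b i * z ^ i) := by ring
    have hstrict : b k * y ^ k < t * (b k * x ^ k) + u * (b k * z ^ k) := by
      have hconv := (strictConvexOn_pow hk2).2 (Set.mem_Ici.2 hx0)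
        (Set.mem_Ici.2 (by linarith : (0:ℝ) ≤ z)) (by linarith : x ≠ z) ht hu htu
      simp only [smul_eq_mul] at hconv
      rw [hxyz] at hconv
      calc b k * y ^ k < b k * (t * x ^ k + u * z ^ k) :=
            mul_lt_mul_of_pos_left hconv hkpos
        _ = t * (b k * x ^ k) + u * (b k * z ^ k) := by ring
    have := hasSum_lt hle hstrict (hC y hymem) hsumr
    rw [hfx, hfz] at this
    linarith [this, hxyz]
  refine ⟨?_, ?_, ?_⟩
  · -- part 1
    intro hdle c hc
    constructor
    · intro hfix
      by_contra hne
      have hclt : c < 1 := lt_of_le_of_ne hc.2 hne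
      have h1 := L1 c hc.1 hclt
      have h2 : 0 ≤ (1 - c) * (1 - d) := mul_nonneg (by linarith) (by linarith)
      nlinarith
    · rintro rfl; exact hC1
  · -- part 2
    intro hdgt hnodd
    -- some even-index coefficient positive
    have hje : ∃ j, Even j ∧ 0 < b j := by
      by_contra h
      push_neg at h
      have hz : ∀ j : ℕ, Even j → b j = 0 := fun j hj => le_antisymm (h j hj) (hb j)
      apply hnodd
      intro x hx
      have hx' : -x ∈ Set.Icc (-1:ℝ) 1 := ⟨by linarith [hx.2], by linarith [hx.1]⟩
      have h1 := hC (-x) hx'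
      have h2 := (hC x hx).neg
      have heq : (fun i => b i * (-x) ^ i) = fun i => -(b i * x ^ i) := by
        funext i
        rcases Nat.even_or_odd i with he | ho
        · simp [hz i he]
        · rw [ho.neg_pow]; ring
      rw [heq] at h1
      exact h1.unique h2
    -- no fixed points in [-1,0)
    have hnegfix : ∀ c, -1 ≤ c → c < 0 → c < C c := by
      intro c h1 h2
      obtain ⟨j, hje', hjpos⟩ := hje
      have hcicc : c ∈ Set.Icc (-1:ℝ) 1 := ⟨h1, by linarith⟩
      have hle : ∀ i : ℕ, b i * c ≤ b i * c ^ i := fun i =>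
        mul_le_mul_of_nonneg_left (neg_le_pow_aux c h1 h2.le i) (hb i)
      have hstrict : b j * c < b j * c ^ j :=
        mul_lt_mul_of_pos_left (lt_of_lt_of_le h2 (hje'.pow_nonneg c)) hjpos
      have := hasSum_lt hle hstrict (hb1.mul_right c) (hC c hcicc)
      linarith [this]
    -- continuity of C on [-1,1]
    have hcont : ContinuousOn C (Set.Icc (-1:ℝ) 1) := by
      rw [continuousOn_iff_continuous_restrict]
      have hres : (Set.Icc (-1:ℝ) 1).domRestrict C
          = fun x : Set.Icc (-1:ℝ) 1 => ∑' i, b i * (x:ℝ) ^ i :=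
        funext fun x => ((hC x x.2).tsum_eq).symm
      rw [hres]
      apply continuous_tsum (u := b)
      · intro i
        exact continuous_const.mul (continuous_subtype_val.pow i)
      · exact hb1.summable
      · intro i x
        have hx1 : |(x:ℝ)| ≤ 1 := abs_le.2 ⟨x.2.1, x.2.2⟩
        have habs : |b i * (x:ℝ) ^ i| = b i * |(x:ℝ)| ^ i := by
          rw [abs_mul, abs_pow, abs_of_nonneg (hb i)]
        rw [Real.norm_eq_abs, habs]
        calc b i * |(x:ℝ)| ^ i ≤ b i * 1 :=
              mul_le_mul_of_nonneg_left (pow_le_one₀ (abs_nonneg _) hx1) (hb i)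
          _ = b i := mul_one _
    -- find c0 ∈ (0,1) with C c0 < c0
    have htend := hd.tendsto_sum_nat
    obtain ⟨N, hN⟩ := ((tendsto_order.1 htend).1 1 hdgt).exists
    set s : ℝ := ∑ i ∈ Finset.range N, (i:ℝ) * b i with hs_def
    have hcont1 : Filter.Tendsto (fun c : ℝ => c ^ N * s) (nhdsWithin 1 (Set.Iio 1)) (nhds s) := by
      have hco : Continuous fun c : ℝ => c ^ N * s := by continuity
      have := (hco.tendsto 1).mono_left (nhdsWithin_le_nhds (s := Set.Iio 1))
      simpa using this
    have hev1 : ∀ᶠ c in nhdsWithin (1:ℝ) (Set.Iio 1), 1 < c ^ N * s :=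
      (tendsto_order.1 hcont1).1 1 hN
    have hev2 : ∀ᶠ c in nhdsWithin (1:ℝ) (Set.Iio 1), 0 < c :=
      (eventually_gt_nhds one_pos).filter_mono nhdsWithin_le_nhds
    have hev3 : ∀ᶠ c in nhdsWithin (1:ℝ) (Set.Iio 1), c < 1 :=
      eventually_mem_nhdsWithin.mono fun c hc => hc
    obtain ⟨c0, hc0s, hc0pos, hc0lt⟩ : ∃ c0 : ℝ, 1 < c0 ^ N * s ∧ 0 < c0 ∧ c0 < 1 := by
      obtain ⟨c0, ⟨ha, hb'⟩, hc'⟩ := ((hev1.and hev2).and hev3).exists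
      exact ⟨c0, ha, hb', hc'⟩
    have hc0icc : c0 ∈ Set.Icc (-1:ℝ) 1 := ⟨by linarith, hc0lt.le⟩
    have hC0c0 : C c0 < c0 := by
      have hsum : HasSum (fun i => b i * (1 - c0 ^ i)) (1 - C c0) := by
        have h := hb1.sub (hC c0 hc0icc)
        simpa only [mul_sub, mul_one] using h
      have key : ∀ i ∈ Finset.range N, (i:ℝ) * b i * (c0 ^ N * (1 - c0)) ≤ b i * (1 - c0 ^ i) := by
        intro i hi
        have hiN : i ≤ N := (Finset.mem_range.1 hi).le
        have hp1 : c0 ^ N ≤ c0 ^ i := pow_le_pow_of_le_one hc0pos.le hc0lt.le hiN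
        have hp2 := pow_lb_aux c0 hc0pos.le hc0lt.le i
        have h3 : (i:ℝ) * (c0 ^ N * (1 - c0)) ≤ 1 - c0 ^ i := by
          have h4 : (i:ℝ) * c0 ^ N * (1 - c0) ≤ (i:ℝ) * c0 ^ i * (1 - c0) :=
            mul_le_mul_of_nonneg_right
              (mul_le_mul_of_nonneg_left hp1 (Nat.cast_nonneg i)) (by linarith)
          nlinarith [hp2, h4]
        calc (i:ℝ) * b i * (c0 ^ N * (1 - c0)) = b i * ((i:ℝ) * (c0 ^ N * (1 - c0))) := by ring
          _ ≤ b i * (1 - c0 ^ i) := mul_le_mul_of_nonneg_left h3 (hb i)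
      have hpartial : s * (c0 ^ N * (1 - c0)) ≤ 1 - C c0 := by
        have h4 := Finset.sum_le_sum key
        have h5 : ∑ i ∈ Finset.range N, b i * (1 - c0 ^ i) ≤ 1 - C c0 :=
          sum_le_hasSum _ (fun i _ => mul_nonneg (hb i)
            (sub_nonneg.2 (pow_le_one₀ hc0pos.le hc0lt.le))) hsum
        have h6 : ∑ i ∈ Finset.range N, (i:ℝ) * b i * (c0 ^ N * (1 - c0))
            = s * (c0 ^ N * (1 - c0)) := by
          rw [hs_def, Finset.sum_mul]
        linarith
      have h7 : (1:ℝ) * (1 - c0) < (c0 ^ N * s) * (1 - c0) :=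
        mul_lt_mul_of_pos_right hc0s (by linarith)
      nlinarith [hpartial, h7]
    -- IVT
    have hCnonneg0 : 0 ≤ C 0 :=
      (hC 0 hmem0).nonneg fun i => mul_nonneg (hb i) (pow_nonneg le_rfl i)
    have hIcc01 : Set.Icc (0:ℝ) c0 ⊆ Set.Icc (-1:ℝ) 1 :=
      Set.Icc_subset_Icc (by norm_num) hc0lt.le
    have hgcont : ContinuousOn (fun x => C x - x) (Set.Icc 0 c0) :=
      (hcont.mono hIcc01).sub continuousOn_id
    have h0mem : (0:ℝ) ∈ Set.Icc (C c0 - c0) (C 0 - 0) := ⟨by linarith, by linarith⟩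
    obtain ⟨cs, hcsmem, hcseq⟩ := intermediate_value_Icc' hc0pos.le hgcont h0mem
    have hcsfix : C cs = cs := by
      have h8 : C cs - cs = 0 := hcseq
      linarith
    have hcslt : cs < 1 := lt_of_le_of_lt hcsmem.2 hc0lt
    refine ⟨cs, ⟨hcsmem.1, hcslt⟩, ?_⟩
    intro c hc
    constructor
    · intro hfix
      by_cases hc1 : c = 1
      · exact Or.inr hc1
      have hclt1 : c < 1 := lt_of_le_of_ne hc.2 hc1
      rcases lt_or_ge c 0 with hneg | hge
      · exfalso
        have h9 := hnegfix c hc.1 hneg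
        rw [hfix] at h9
        exact lt_irrefl c h9
      by_cases hccs : c = cs
      · exact Or.inl hccs
      exfalso
      rcases lt_or_gt_of_ne hccs with hlt | hgt
      · have h10 := L2 c cs 1 hge hlt hcslt le_rfl hfix hC1
        rw [hcsfix] at h10
        exact lt_irrefl cs h10
      · have h10 := L2 cs c 1 hcsmem.1 hgt hclt1 le_rfl hcsfix hC1
        rw [hfix] at h10
        exact lt_irrefl c h10
    · rintro (rfl | rfl)
      · exact hcsfix
      · exact hC1
  · -- part 3
    intro hodd c hc
    have hC0 : C 0 = 0 := by
      have h1 := hodd 0 hmem0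
      rw [neg_zero] at h1
      linarith
    have hposfix : ∀ x, 0 < x → x < 1 → C x ≠ x := by
      intro x h1 h2 hf
      have := L2 0 x 1 le_rfl h1 h2 le_rfl hC0 hC1
      rw [hf] at this
      exact lt_irrefl x this
    constructor
    · intro hfix
      rcases lt_trichotomy c 0 with hneg | rfl | hposc
      · rcases eq_or_lt_of_le hc.1 with heq | hgt
        · exact Or.inl heq.symm
        · exfalso
          have h1 := hodd c hc
          rw [hfix] at h1
          exact hposfix (-c) (by linarith) (by linarith) h1
      · exact Or.inr (Or.inl rfl)
      · rcases eq_or_lt_of_le hc.2 with heq | hlt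
        · exact Or.inr (Or.inr heq)
        · exact absurd hfix (hposfix c hposc hlt)
    · rintro (rfl | rfl | rfl)
      · have h1 := hodd 1 hmem1
        rw [hC1] at h1
        exact h1
      · exact hC0
      · exact hC1
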